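/- Let W : ℝⁿ → ℝ be measurable with W ≥ T > 0 and ∫ (W+1)^{-1} dx < ∞, let M > 0, and let γ be a piecewise C¹ path from -M to s in ℂ \ [T,∞). Then ∫_γ (∫_{ℝⁿ} (W(x)-s')^{-1} dx) ds' = ∫_{ℝⁿ} log((W(x)+M)/(W(x)-s)) dx, where log is the principal branch, and the value is independent of the choice of path γ in ℂ \ [T,∞). -/

import Mathlib

set_option maxHeartbeats 1000000


open Set Filter MeasureTheory Complex intervalIntegral

/-- The computation of `𝓜(s) = ∫_{-M}^s 𝓘̂(s') ds'` in the proof of Theorem 1: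
for any (piecewise) `C¹` path `γ` from `-M` to `s` in `ℂ \ [T,∞)`,
`∫_γ (∫ (W(x)-s')⁻¹ dx) ds' = ∫ log((W(x)+M)/(W(x)-s)) dx` (principal branch);
in particular the left-hand side is independent of the choice of such a path. -/
theorem path_integral_of_hilbert_transform
    {n : ℕ} (W : EuclideanSpace ℝ (Fin n) → ℝ) (hWmeas : Measurable W)
    (T : ℝ) (hT : 0 < T) (hWT : ∀ x, T ≤ W x)
    (hint : Integrable (fun x : EuclideanSpace ℝ (Fin n) => (W x + 1)⁻¹) volume)
    (M : ℝ) (hM : 0 < M) (s : ℂ) (hs : s ∉ {z : ℂ | z.im = 0 ∧ T ≤ z.re})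
    (γ γ' : ℝ → ℂ)
    (hγ0 : γ 0 = -(M : ℂ)) (hγ1 : γ 1 = s)
    (hγrange : ∀ u ∈ Set.Icc (0:ℝ) 1, γ u ∉ {z : ℂ | z.im = 0 ∧ T ≤ z.re})
    (hγderiv : ∀ u ∈ Set.Icc (0:ℝ) 1, HasDerivAt γ (γ' u) u)
    (hγ'cont : ContinuousOn γ' (Set.Icc 0 1)) :
    ∫ u in (0:ℝ)..1,
        (∫ x : EuclideanSpace ℝ (Fin n), ((W x : ℂ) - γ u)⁻¹) * γ' u =
      ∫ x : EuclideanSpace ℝ (Fin n),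
        Complex.log (((W x : ℂ) + M) / ((W x : ℂ) - s)) := by
  -- slit-plane membership
  have hslit : ∀ u ∈ Set.Icc (0:ℝ) 1, ∀ x, ((W x : ℂ) - γ u) ∈ Complex.slitPlane := by
    intro u hu x
    rcases eq_or_ne (γ u).im 0 with him | him
    · have hre : (γ u).re < T := by
        by_contra h
        exact hγrange u hu ⟨him, le_of_not_gt h⟩
      exact Or.inl (by simp only [Complex.sub_re, Complex.ofReal_re]; linarith [hWT x])
    · exact Or.inr (by simp [Complex.sub_im, him])
  have hne : ∀ u ∈ Set.Icc (0:ℝ) 1, ∀ x, ((W x : ℂ) - γ u) ≠ 0 :=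
    fun u hu x => Complex.slitPlane_ne_zero (hslit u hu x)
  have γcont : ContinuousOn γ (Set.Icc 0 1) :=
    fun u hu => (hγderiv u hu).continuousAt.continuousWithinAt
  -- s avoids the slit plane as well
  have hsslit : ∀ x, ((W x : ℂ) - s) ∈ Complex.slitPlane := by
    intro x
    have := hslit 1 (by norm_num) x
    rwa [hγ1] at this
  have hsne : ∀ x, ((W x : ℂ) - s) ≠ 0 := fun x => Complex.slitPlane_ne_zero (hsslit x)
  -- a uniform bound on ‖γ‖
  obtain ⟨R₀, hR₀⟩ := isCompact_Icc.exists_bound_of_continuousOn γcont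
  set R : ℝ := max R₀ T with hRdef
  have hRT : T ≤ R := le_max_right _ _
  have hRpos : 0 < R := lt_of_lt_of_le hT hRT
  have hR : ∀ u ∈ Set.Icc (0:ℝ) 1, ‖γ u‖ ≤ R := fun u hu => (hR₀ u hu).trans (le_max_left _ _)
  -- a positive lower bound δ on ‖t - γ u‖ for t in the compact piece of the slit
  set Q : Set (ℝ × ℝ) := Set.Icc (0:ℝ) 1 ×ˢ Set.Icc T (2*R+1) with hQdef
  have hQc : IsCompact Q := isCompact_Icc.prod isCompact_Icc
  have hQne : Q.Nonempty := ⟨(0, T), by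
    constructor
    · exact ⟨le_refl _, zero_le_one⟩
    · exact ⟨le_refl _, by linarith⟩⟩
  have hφcont : ContinuousOn (fun p : ℝ × ℝ => ‖(p.2 : ℂ) - γ p.1‖) Q := by
    apply ContinuousOn.norm
    apply ContinuousOn.sub
    · exact (Complex.continuous_ofReal.comp continuous_snd).continuousOn
    · exact γcont.comp continuous_fst.continuousOn (fun p hp => hp.1)
  obtain ⟨p₀, hp₀Q, hp₀min⟩ := hQc.exists_isMinOn hQne hφcont
  set δ : ℝ := ‖(p₀.2 : ℂ) - γ p₀.1‖ with hδdef
  have hδpos : 0 < δ := by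
    rw [hδdef, norm_pos_iff]
    intro h
    have : γ p₀.1 = (p₀.2 : ℂ) := by linear_combination -h
    exact hγrange p₀.1 hp₀Q.1 (by rw [this]; exact ⟨Complex.ofReal_im _, hp₀Q.2.1⟩)
  set c : ℝ := min (δ / (2*R+2)) (1/2) with hcdef
  have hcpos : 0 < c := lt_min (div_pos hδpos (by linarith)) (by norm_num)
  have hc2 : c ≤ 1/2 := min_le_right _ _
  -- key lower bound
  have hlow : ∀ u ∈ Set.Icc (0:ℝ) 1, ∀ x, c * (W x + 1) ≤ ‖(W x : ℂ) - γ u‖ := by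
    intro u hu x
    have hWx : T ≤ W x := hWT x
    rcases le_or_gt (W x) (2*R+1) with hle | hgt
    · have hmem : (u, W x) ∈ Q := ⟨hu, ⟨hWx, hle⟩⟩
      have hδle : δ ≤ ‖((W x : ℝ) : ℂ) - γ u‖ := isMinOn_iff.mp hp₀min (u, W x) hmem
      have hc1 : c ≤ δ / (2*R+2) := min_le_left _ _
      have : c * (W x + 1) ≤ (δ / (2*R+2)) * (2*R+2) := by
        apply mul_le_mul hc1 (by linarith) (by linarith) (le_of_lt (div_pos hδpos (by linarith)))
      rw [div_mul_cancel₀ _ (by linarith : (2*R+2 : ℝ) ≠ 0)] at this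
      linarith
    · have h1 : ‖((W x : ℝ) : ℂ)‖ - ‖γ u‖ ≤ ‖((W x : ℝ) : ℂ) - γ u‖ :=
        norm_sub_norm_le _ _
      have h2 : ‖((W x : ℝ) : ℂ)‖ = W x := by
        rw [Complex.norm_real, Real.norm_eq_abs, abs_of_pos (by linarith)]
      have h3 : W x - R ≤ ‖((W x : ℝ) : ℂ) - γ u‖ := by
        have := hR u hu; rw [h2] at h1; linarith
      have : c * (W x + 1) ≤ (1/2) * (W x + 1) :=
        mul_le_mul_of_nonneg_right hc2 (by linarith)
      linarith
  -- a uniform bound on ‖γ'‖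
  obtain ⟨C₀, hC₀⟩ := isCompact_Icc.exists_bound_of_continuousOn hγ'cont
  set C : ℝ := max C₀ 0 with hCdef
  have hCnn : 0 ≤ C := le_max_right _ _
  have hC : ∀ u ∈ Set.Icc (0:ℝ) 1, ‖γ' u‖ ≤ C := fun u hu => (hC₀ u hu).trans (le_max_left _ _)
  -- the pointwise bound on the integrand
  have hGbound : ∀ u ∈ Set.Icc (0:ℝ) 1, ∀ x,
      ‖((W x : ℂ) - γ u)⁻¹ * γ' u‖ ≤ (C / c) * (W x + 1)⁻¹ := by
    intro u hu x
    have hW1 : (0:ℝ) < W x + 1 := by linarith [hWT x]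
    have hlow' := hlow u hu x
    have hnorm_pos : (0:ℝ) < ‖(W x : ℂ) - γ u‖ := lt_of_lt_of_le (by positivity) hlow'
    rw [norm_mul, norm_inv]
    calc ‖(W x : ℂ) - γ u‖⁻¹ * ‖γ' u‖
        ≤ (c * (W x + 1))⁻¹ * C := by
          apply mul_le_mul (inv_anti₀ (by positivity) hlow') (hC u hu)
            (norm_nonneg _) (by positivity)
      _ = (C / c) * (W x + 1)⁻¹ := by
          field_simp
  -- measure on the time interval
  set μ : Measure ℝ := volume.restrict (Set.Ioc (0:ℝ) 1) with hμdef
  haveI : IsFiniteMeasure μ := by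
    constructor
    rw [hμdef, Measure.restrict_apply_univ, Real.volume_Ioc]
    exact ENNReal.ofReal_lt_top
  have hμae : ∀ᵐ u ∂μ, u ∈ Set.Ioc (0:ℝ) 1 := ae_restrict_mem measurableSet_Ioc
  -- measurability of the integrand on the product
  have hγm : AEStronglyMeasurable γ μ :=
    (γcont.mono Set.Ioc_subset_Icc_self).aestronglyMeasurable measurableSet_Ioc
  have hγ'm : AEStronglyMeasurable γ' μ :=
    (hγ'cont.mono Set.Ioc_subset_Icc_self).aestronglyMeasurable measurableSet_Ioc
  have hWm : AEStronglyMeasurable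
      (fun p : ℝ × EuclideanSpace ℝ (Fin n) => ((W p.2 : ℂ))) (μ.prod volume) :=
    (Complex.measurable_ofReal.comp (hWmeas.comp measurable_snd)).aestronglyMeasurable
  have hGm : AEStronglyMeasurable
      (fun p : ℝ × EuclideanSpace ℝ (Fin n) => ((W p.2 : ℂ) - γ p.1)⁻¹ * γ' p.1)
      (μ.prod volume) := by
    exact (((hWm.sub hγm.comp_fst).aemeasurable.inv).mul hγ'm.comp_fst.aemeasurable).aestronglyMeasurable
  -- integrability of the dominating function on the product
  have hbint : Integrable (fun x : EuclideanSpace ℝ (Fin n) => (C / c) * (W x + 1)⁻¹) volume :=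
    hint.const_mul _
  have hbm : AEStronglyMeasurable
      (fun p : ℝ × EuclideanSpace ℝ (Fin n) => (C / c) * (W p.2 + 1)⁻¹) (μ.prod volume) :=
    ((((hWmeas.comp measurable_snd).add_const 1).inv).const_mul _).aestronglyMeasurable
  have hbprod : Integrable
      (fun p : ℝ × EuclideanSpace ℝ (Fin n) => (C / c) * (W p.2 + 1)⁻¹) (μ.prod volume) := by
    rw [integrable_prod_iff hbm]
    constructor
    · exact ae_of_all _ fun u => hbint
    · apply (integrable_const (∫ x : EuclideanSpace ℝ (Fin n), ‖(C / c) * (W x + 1)⁻¹‖)).congr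
      exact ae_of_all _ fun u => rfl
  -- integrability of the integrand on the product
  have hGint : Integrable
      (Function.uncurry fun (u : ℝ) (x : EuclideanSpace ℝ (Fin n)) =>
        ((W x : ℂ) - γ u)⁻¹ * γ' u)
      (μ.prod volume) := by
    show Integrable (fun p : ℝ × EuclideanSpace ℝ (Fin n) => ((W p.2 : ℂ) - γ p.1)⁻¹ * γ' p.1) (μ.prod volume)
    apply hbprod.mono' hGm
    filter_upwards [(Measure.quasiMeasurePreserving_fst (μ := μ)
      (ν := (volume : Measure (EuclideanSpace ℝ (Fin n))))).ae hμae] with p hp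
    exact hGbound p.1 (Set.Ioc_subset_Icc_self hp) p.2
  -- the inner integral over u, for each fixed x
  have key : ∀ x, ∫ u in (0:ℝ)..1, ((W x : ℂ) - γ u)⁻¹ * γ' u
      = Complex.log ((W x : ℂ) + M) - Complex.log ((W x : ℂ) - s) := by
    intro x
    have hderiv : ∀ u ∈ Set.uIcc (0:ℝ) 1,
        HasDerivAt (fun u => -Complex.log ((W x : ℂ) - γ u)) (((W x : ℂ) - γ u)⁻¹ * γ' u) u := by
      intro u hu
      rw [Set.uIcc_of_le zero_le_one] at hu
      have h1 : HasDerivAt (fun u => (W x : ℂ) - γ u) (0 - γ' u) u :=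
        (hasDerivAt_const u ((W x : ℂ))).sub (hγderiv u hu)
      have h2 := (h1.clog_real (hslit u hu x)).neg
      exact h2.congr_deriv (by ring)
  -- FTC over [0,1]
    have hii : IntervalIntegrable (fun u => ((W x : ℂ) - γ u)⁻¹ * γ' u) volume 0 1 := by
      apply ContinuousOn.intervalIntegrable
      rw [Set.uIcc_of_le zero_le_one]
      exact ((continuous_const.continuousOn.sub γcont).inv₀ (fun u hu => hne u hu x)).mul hγ'cont
    rw [intervalIntegral.integral_eq_sub_of_hasDerivAt hderiv hii, hγ1, hγ0,
      sub_neg_eq_add]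
    ring
  -- principal-branch identity : log of the quotient
  have hlog : ∀ x, Complex.log (((W x : ℂ) + M) / ((W x : ℂ) - s))
      = Complex.log ((W x : ℂ) + M) - Complex.log ((W x : ℂ) - s) := by
    intro x
    have hWM : (0:ℝ) < W x + M := by linarith [hWT x]
    have hcast : ((W x : ℂ) + M) = ((W x + M : ℝ) : ℂ) := by push_cast; ring
    rw [hcast, div_eq_mul_inv,
      Complex.log_ofReal_mul hWM (inv_ne_zero (hsne x)),
      Complex.log_inv _ (Complex.slitPlane_arg_ne_pi (hsslit x)),
      Complex.ofReal_log (le_of_lt hWM)]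
    ring
  -- assemble
  calc ∫ u in (0:ℝ)..1, (∫ x : EuclideanSpace ℝ (Fin n), ((W x : ℂ) - γ u)⁻¹) * γ' u
      = ∫ u in (0:ℝ)..1, ∫ x : EuclideanSpace ℝ (Fin n), ((W x : ℂ) - γ u)⁻¹ * γ' u := by
        apply intervalIntegral.integral_congr
        intro u _
        exact (MeasureTheory.integral_mul_const (γ' u) _).symm
    _ = ∫ u in Set.Ioc (0:ℝ) 1,
          (∫ x : EuclideanSpace ℝ (Fin n), ((W x : ℂ) - γ u)⁻¹ * γ' u) := by
        rw [intervalIntegral.integral_of_le zero_le_one]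
    _ = ∫ x : EuclideanSpace ℝ (Fin n),
          ∫ u in Set.Ioc (0:ℝ) 1, ((W x : ℂ) - γ u)⁻¹ * γ' u := by
        exact MeasureTheory.integral_integral_swap
          (f := fun (u : ℝ) (x : EuclideanSpace ℝ (Fin n)) => ((W x : ℂ) - γ u)⁻¹ * γ' u) hGint
    _ = ∫ x : EuclideanSpace ℝ (Fin n),
          Complex.log (((W x : ℂ) + M) / ((W x : ℂ) - s)) := by
        refine MeasureTheory.integral_congr_ae (ae_of_all _ fun x => ?_)
        show (∫ u in Set.Ioc (0:ℝ) 1, ((W x : ℂ) - γ u)⁻¹ * γ' u) = _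
        rw [← intervalIntegral.integral_of_le zero_le_one, key x]
        exact (hlog x).symm
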